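/- For each n ≥ 1 and each integer t ≥ 0, the number of lattice points in the t-th dilate of the Laplacian simplex T_{K_n} of the complete graph equals C(tn + n - 1, n - 1), the number of weak compositions of tn into n parts. -/

import Mathlib

open Pointwise Finset

namespace EhrhartKn

/-- extended sequence over ℝ : `xs x 0 = 0`, `xs x k = x (k-1)` for `1 ≤ k ≤ m`, `0` beyond -/
def xs (m : ℕ) (x : Fin m → ℝ) (k : ℕ) : ℝ :=
  if h : 0 < k ∧ k ≤ m then x ⟨k - 1, by omega⟩ else 0

/-- integer version of `xs` -/
def zs (m : ℕ) (x : Fin m → ℤ) (k : ℕ) : ℤ :=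
  if h : 0 < k ∧ k ≤ m then x ⟨k - 1, by omega⟩ else 0

/-- the vertices of the Laplacian simplex of the complete graph `K_{m+1}` -/
def vtx (m : ℕ) : Fin (m + 1) → Fin m → ℝ := fun i j =>
  if (i : ℕ) ≤ (j : ℕ) then ((m + 1 : ℕ) : ℝ) - 1 - (j : ℕ) else -((j : ℕ) + 1)

lemma xs_cast (m : ℕ) (x : Fin m → ℤ) (k : ℕ) :
    xs m (fun j => (x j : ℝ)) k = ((zs m x k : ℤ) : ℝ) := by
  unfold xs zs; split_ifs <;> simp

/-- extension of weights to ℕ -/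
def ext (m : ℕ) (w : Fin (m + 1) → ℝ) (k : ℕ) : ℝ :=
  if h : k < m + 1 then w ⟨k, h⟩ else 0

lemma ext_coe (m : ℕ) (w : Fin (m + 1) → ℝ) (i : Fin (m + 1)) : ext m w (i : ℕ) = w i := by
  simp [ext, i.isLt]

lemma sum_ext (m : ℕ) (w : Fin (m + 1) → ℝ) :
    ∑ k ∈ range (m + 1), ext m w k = ∑ i, w i := by
  rw [← Fin.sum_univ_eq_sum_range (ext m w) (m + 1)]
  exact Finset.sum_congr rfl fun i _ => ext_coe m w i

/-- key coordinate computation -/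
lemma sumA (m : ℕ) (w : Fin (m + 1) → ℝ) (hw : ∑ i, w i = 1) (j : Fin m) :
    ∑ i, w i * vtx m i j =
      ((m : ℝ) + 1) * (∑ k ∈ range ((j : ℕ) + 1), ext m w k) - ((j : ℕ) + 1) := by
  have h1 : ∀ i : Fin (m + 1), w i * vtx m i j
      = (if (i : ℕ) ≤ (j : ℕ) then ((m : ℝ) + 1) * w i else 0) - ((j : ℕ) + 1) * w i := by
    intro i
    unfold vtx
    split_ifs with h
    · push_cast; ring
    · ring
  rw [Finset.sum_congr rfl (fun i _ => h1 i), Finset.sum_sub_distrib, ← Finset.mul_sum, hw,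
    mul_one]
  congr 1
  calc ∑ i : Fin (m + 1), (if (i : ℕ) ≤ (j : ℕ) then ((m : ℝ) + 1) * w i else 0)
      = ∑ k ∈ range (m + 1), (if k ≤ (j : ℕ) then ((m : ℝ) + 1) * ext m w k else 0) := by
        rw [← Fin.sum_univ_eq_sum_range
          (fun k => if k ≤ (j : ℕ) then ((m : ℝ) + 1) * ext m w k else 0)]
        exact Finset.sum_congr rfl fun i _ => by rw [ext_coe]
    _ = ∑ k ∈ range ((j : ℕ) + 1), (if k ≤ (j : ℕ) then ((m : ℝ) + 1) * ext m w k else 0) := by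
        refine (Finset.sum_subset (Finset.range_subset_range.2 (by have := j.2; omega)) ?_).symm
        intro k hk hk'
        rw [if_neg]
        simp only [Finset.mem_range] at hk'
        omega
    _ = ∑ k ∈ range ((j : ℕ) + 1), ((m : ℝ) + 1) * ext m w k := by
        refine Finset.sum_congr rfl fun k hk => ?_
        rw [if_pos (Nat.lt_succ_iff.mp (Finset.mem_range.mp hk))]
    _ = ((m : ℝ) + 1) * ∑ k ∈ range ((j : ℕ) + 1), ext m w k := by rw [Finset.mul_sum]

lemma mem_of {m t : ℕ} (ht : 0 < t) (x : Fin m → ℝ)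
    (hc : ∀ i : Fin (m + 1), 0 ≤ xs m x ((i : ℕ) + 1) - xs m x (i : ℕ) + t) :
    x ∈ (t : ℝ) • convexHull ℝ (Set.range (vtx m)) := by
  set c : ℝ := (t : ℝ) * ((m : ℝ) + 1) with hcdef
  have hc0 : (0 : ℝ) < c := by positivity
  set w : Fin (m + 1) → ℝ := fun i => (xs m x ((i : ℕ) + 1) - xs m x (i : ℕ) + t) / c with hwdef
  set f : ℕ → ℝ := fun k => (xs m x k + t * k) / c with hfdef
  have hext : ∀ k, k < m + 1 → ext m w k = f (k + 1) - f k := by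
    intro k hk
    rw [show ext m w k = w ⟨k, hk⟩ from dif_pos hk]
    show (xs m x (k + 1) - xs m x k + t) / c = _
    simp only [hfdef]
    push_cast
    ring
  have hpre : ∀ K, K ≤ m + 1 → ∑ k ∈ range K, ext m w k = f K := by
    intro K hK
    rw [Finset.sum_congr rfl fun k hk =>
      hext k (lt_of_lt_of_le (Finset.mem_range.mp hk) hK)]
    rw [Finset.sum_range_sub f]
    have : f 0 = 0 := by simp [hfdef, xs]
    rw [this, sub_zero]
  have hw1 : ∑ i, w i = 1 := by
    rw [← sum_ext m w, hpre (m + 1) le_rfl]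
    have : xs m x (m + 1) = 0 := by
      simp only [xs]; rw [dif_neg (by omega)]
    simp only [hfdef, this]
    push_cast
    field_simp
    linarith [hcdef]
  have hw0 : ∀ i ∈ Finset.univ, 0 ≤ w i := fun i _ => div_nonneg (hc i) hc0.le
  have hy : Finset.univ.centerMass w (vtx m) ∈ convexHull ℝ (Set.range (vtx m)) :=
    Finset.centerMass_mem_convexHull _ hw0 (by rw [hw1]; norm_num)
      (fun i _ => Set.mem_range_self i)
  rw [Finset.centerMass_eq_of_sum_1 _ _ hw1] at hy
  have hxy : x = (t : ℝ) • ∑ i, w i • vtx m i := by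
    funext j
    have hco : (∑ i, w i • vtx m i) j = ∑ i, w i * vtx m i j := by
      rw [Finset.sum_apply]; rfl
    have hsA := sumA m w hw1 j
    have hfj : f ((j : ℕ) + 1) = (x j + t * ((j : ℕ) + 1)) / c := by
      have : xs m x ((j : ℕ) + 1) = x j := by
        have h2 : 0 < (j : ℕ) + 1 ∧ (j : ℕ) + 1 ≤ m := ⟨Nat.succ_pos _, j.2⟩
        simp only [xs, dif_pos h2, Nat.add_sub_cancel, Fin.eta]
      simp only [hfdef, this]
      push_cast
      ring
    rw [hpre ((j : ℕ) + 1) (by have := j.2; omega), hfj] at hsA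
    have : ((t : ℝ) • ∑ i, w i • vtx m i) j = (t : ℝ) * ∑ i, w i * vtx m i j := by
      rw [Pi.smul_apply, hco, smul_eq_mul]
    rw [this, hsA, hcdef]
    field_simp
    ring
  rw [hxy]
  exact Set.smul_mem_smul_set hy

lemma of_mem {m t : ℕ} (x : Fin m → ℝ)
    (hx : x ∈ (t : ℝ) • convexHull ℝ (Set.range (vtx m))) :
    ∀ i : Fin (m + 1), 0 ≤ xs m x ((i : ℕ) + 1) - xs m x (i : ℕ) + t := by
  obtain ⟨y, hy, rfl⟩ := hx
  rw [convexHull_range_eq_exists_affineCombination] at hy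
  obtain ⟨s, w, hw0, hw1, hy⟩ := hy
  set W : Fin (m + 1) → ℝ := fun i => if i ∈ s then w i else 0 with hWdef
  have hW0 : ∀ i, 0 ≤ W i := by
    intro i
    simp only [hWdef]
    split_ifs with h
    · exact hw0 i h
    · exact le_rfl
  have h1 : ∑ i ∈ s, W i = ∑ i, W i :=
    Finset.sum_subset (Finset.subset_univ s) (fun i _ hi => if_neg hi)
  have h2 : ∑ i ∈ s, W i = ∑ i ∈ s, w i := Finset.sum_congr rfl fun i hi => if_pos hi
  have hW1 : ∑ i, W i = 1 := by rw [← h1, h2, hw1]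
  have hyW : y = ∑ i, W i • vtx m i := by
    have e1 : ∑ i ∈ s, W i • vtx m i = ∑ i, W i • vtx m i :=
      Finset.sum_subset (Finset.subset_univ s)
        (fun i _ hi => by rw [show W i = 0 from if_neg hi, zero_smul])
    have e2 : ∑ i ∈ s, W i • vtx m i = ∑ i ∈ s, w i • vtx m i :=
      Finset.sum_congr rfl fun i hi => by simp only [hWdef, if_pos hi]
    rw [← hy, Finset.affineCombination_eq_linear_combination s _ w hw1, ← e2, e1]
  set P : ℕ → ℝ := fun K => ∑ k ∈ range K, ext m W k with hPdef
  have hyj : ∀ j : Fin m, y j = ((m : ℝ) + 1) * P ((j : ℕ) + 1) - ((j : ℕ) + 1) := by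
    intro j
    have : y j = ∑ i, W i * vtx m i j := by
      rw [hyW, Finset.sum_apply]
      rfl
    rw [this, sumA m W hW1 j]
  have hxs : ∀ K, K ≤ m + 1 → xs m ((t : ℝ) • y) K = t * (((m : ℝ) + 1) * P K - K) := by
    intro K hK
    rcases Nat.eq_zero_or_pos K with hK0 | hK0
    · subst hK0
      simp [xs, hPdef]
    rcases Nat.lt_or_ge K (m + 1) with hKm | hKm
    · have hKm' : K ≤ m := by omega
      have hmem : 0 < K ∧ K ≤ m := ⟨hK0, hKm'⟩
      set j : Fin m := ⟨K - 1, by omega⟩ with hjdef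
      have hjv : (j : ℕ) = K - 1 := rfl
      have hxK : xs m ((t : ℝ) • y) K = ((t : ℝ) • y) j := by
        rw [xs, dif_pos hmem]
      have hP : P ((j : ℕ) + 1) = P K := by
        rw [show (j : ℕ) + 1 = K by rw [hjv]; omega]
      have hcast : ((j : ℕ) : ℝ) + 1 = (K : ℝ) := by
        rw [hjv, Nat.cast_sub (by omega : 1 ≤ K)]
        ring
      rw [hxK, Pi.smul_apply, smul_eq_mul, hyj j, hP, hcast]
    · have hKeq : K = m + 1 := by omega
      subst hKeq
      have hx0 : xs m ((t : ℝ) • y) (m + 1) = 0 := by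
        rw [xs, dif_neg (by omega)]
      have hP1 : P (m + 1) = 1 := by
        show ∑ k ∈ range (m + 1), ext m W k = 1
        rw [sum_ext m W, hW1]
      rw [hx0, hP1]
      push_cast
      ring
  intro i
  have hi := i.isLt
  rw [hxs ((i : ℕ) + 1) (by omega), hxs (i : ℕ) (by omega)]
  have hPs : P ((i : ℕ) + 1) = P (i : ℕ) + W i := by
    show ∑ k ∈ range ((i : ℕ) + 1), ext m W k = (∑ k ∈ range (i : ℕ), ext m W k) + W i
    rw [Finset.sum_range_succ, ext_coe]
  rw [hPs]
  have key : (0 : ℝ) ≤ (t : ℝ) * (((m : ℝ) + 1) * W i) :=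
    mul_nonneg (Nat.cast_nonneg t) (mul_nonneg (by positivity) (hW0 i))
  refine le_trans key (le_of_eq ?_)
  push_cast
  ring

def zext (m : ℕ) (z : Fin (m + 1) → ℕ) (k : ℕ) : ℤ :=
  if h : k < m + 1 then (z ⟨k, h⟩ : ℤ) else 0

def toX (m t : ℕ) (z : Fin (m + 1) → ℕ) : Fin m → ℤ := fun j =>
  (∑ k ∈ range ((j : ℕ) + 1), zext m z k) - t * ((j : ℕ) + 1)

lemma zsum (m t : ℕ) (x : Fin m → ℤ) (K : ℕ) :
    ∑ k ∈ range K, (zs m x (k + 1) - zs m x k + t) = zs m x K + t * K := by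
  have : ∀ k ∈ range K, zs m x (k + 1) - zs m x k + t
      = (zs m x (k + 1) + t * ((k + 1 : ℕ) : ℤ)) - (zs m x k + t * ((k : ℕ) : ℤ)) := by
    intro k _
    push_cast
    ring
  rw [Finset.sum_congr rfl this, Finset.sum_range_sub (fun k => zs m x k + t * ((k : ℕ) : ℤ))]
  have h0 : zs m x 0 = (0 : ℤ) := by simp [zs]
  rw [h0]
  push_cast
  ring

lemma zs_top (m : ℕ) (x : Fin m → ℤ) : zs m x (m + 1) = 0 := by
  rw [zs, dif_neg (by omega)]

lemma sum_zext (m : ℕ) (z : Fin (m + 1) → ℕ) :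
    ∑ k ∈ range (m + 1), zext m z k = ((∑ i, z i : ℕ) : ℤ) := by
  rw [← Fin.sum_univ_eq_sum_range (zext m z) (m + 1)]
  push_cast
  exact Finset.sum_congr rfl fun i _ => by simp [zext, i.isLt]

lemma zs_toX (m t : ℕ) (z : Fin (m + 1) → ℕ) (hz : ∑ i, z i = t * (m + 1)) :
    ∀ K, K ≤ m + 1 → zs m (toX m t z) K = (∑ k ∈ range K, zext m z k) - t * K := by
  intro K hK
  rcases Nat.eq_zero_or_pos K with hK0 | hK0
  · subst hK0; simp [zs]
  rcases Nat.lt_or_ge K (m + 1) with hKm | hKm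
  · have hmem : 0 < K ∧ K ≤ m := ⟨hK0, by omega⟩
    rw [zs, dif_pos hmem]
    show toX m t z ⟨K - 1, by omega⟩ = _
    rw [toX]
    simp only
    have h1 : ((⟨K - 1, by omega⟩ : Fin m) : ℕ) + 1 = K := by
      simp only [Fin.val_mk]; omega
    rw [h1]
    have h2 : (((⟨K - 1, by omega⟩ : Fin m) : ℕ) : ℤ) + 1 = (K : ℤ) := by
      simp only [Fin.val_mk]
      omega
    rw [h2]
  · have hKeq : K = m + 1 := by omega
    subst hKeq
    rw [zs_top, sum_zext, hz]
    push_cast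
    ring

lemma d_toX (m t : ℕ) (z : Fin (m + 1) → ℕ) (hz : ∑ i, z i = t * (m + 1)) (i : Fin (m + 1)) :
    zs m (toX m t z) ((i : ℕ) + 1) - zs m (toX m t z) (i : ℕ) + t = (z i : ℤ) := by
  have hi := i.isLt
  rw [zs_toX m t z hz ((i : ℕ) + 1) (by omega), zs_toX m t z hz (i : ℕ) (by omega),
    Finset.sum_range_succ]
  have : zext m z (i : ℕ) = (z i : ℤ) := by simp [zext, i.isLt]
  rw [this]
  push_cast
  ring

def compEquiv (m t : ℕ) :
    {x : Fin m → ℤ // ∀ i : Fin (m + 1), 0 ≤ zs m x ((i : ℕ) + 1) - zs m x (i : ℕ) + t} ≃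
      {z : Fin (m + 1) → ℕ // ∑ i, z i = t * (m + 1)} where
  toFun x := ⟨fun i => (zs m x.1 ((i : ℕ) + 1) - zs m x.1 (i : ℕ) + t).toNat, by
    have hcast : ((∑ i : Fin (m + 1),
          (zs m x.1 ((i : ℕ) + 1) - zs m x.1 (i : ℕ) + t).toNat : ℕ) : ℤ)
        = ∑ i : Fin (m + 1), (zs m x.1 ((i : ℕ) + 1) - zs m x.1 (i : ℕ) + t) := by
      push_cast
      exact Finset.sum_congr rfl fun i _ => Int.toNat_of_nonneg (x.2 i)
    have hsum : ∑ i : Fin (m + 1), (zs m x.1 ((i : ℕ) + 1) - zs m x.1 (i : ℕ) + t)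
        = (t : ℤ) * (m + 1) := by
      rw [Fin.sum_univ_eq_sum_range (fun k => zs m x.1 (k + 1) - zs m x.1 k + t) (m + 1),
        zsum, zs_top]
      push_cast
      ring
    have : ((∑ i : Fin (m + 1),
          (zs m x.1 ((i : ℕ) + 1) - zs m x.1 (i : ℕ) + t).toNat : ℕ) : ℤ)
        = ((t * (m + 1) : ℕ) : ℤ) := by
      rw [hcast, hsum]; push_cast; ring
    exact_mod_cast this⟩
  invFun z := ⟨toX m t z.1, by
    intro i
    rw [d_toX m t z.1 z.2 i]
    positivity⟩
  left_inv := by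
    rintro ⟨x, hx⟩
    apply Subtype.ext
    funext j
    show toX m t _ j = x j
    rw [toX]
    simp only
    have hj := j.isLt
    have h1 : ∀ k ∈ range ((j : ℕ) + 1),
        zext m (fun i => (zs m x ((i : ℕ) + 1) - zs m x (i : ℕ) + t).toNat) k
          = zs m x (k + 1) - zs m x k + t := by
      intro k hk
      have hk' : k < m + 1 := by have := Finset.mem_range.mp hk; omega
      rw [zext, dif_pos hk']
      simp only [Fin.val_mk]
      exact Int.toNat_of_nonneg (hx ⟨k, hk'⟩)
    rw [Finset.sum_congr rfl h1, zsum]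
    have h2 : zs m x ((j : ℕ) + 1) = x j := by
      rw [zs, dif_pos ⟨Nat.succ_pos _, j.isLt⟩]
      simp
    rw [h2]
    push_cast
    ring
  right_inv := by
    rintro ⟨z, hz⟩
    apply Subtype.ext
    funext i
    show (zs m (toX m t z) ((i : ℕ) + 1) - zs m (toX m t z) (i : ℕ) + t).toNat = z i
    rw [d_toX m t z hz i]
    exact Int.toNat_natCast (z i)

lemma card_comp (N k : ℕ) :
    Nat.card {z : Fin N → ℕ // ∑ i, z i = k} = (N + k - 1).choose k := by
  have hcount : ∀ s : Multiset (Fin N), ∑ i : Fin N, s.count i = Multiset.card s := by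
    intro s
    rw [← Multiset.toFinset_sum_count_eq s]
    exact (Finset.sum_subset (Finset.subset_univ _) (fun i _ hi => by
      simpa [Multiset.count_eq_zero] using fun h => hi (Multiset.mem_toFinset.mpr h))).symm
  have e : Sym (Fin N) k ≃ {z : Fin N → ℕ // ∑ i, z i = k} := by
    refine Equiv.subtypeEquiv (Multiset.toFinsupp.toEquiv.trans Finsupp.equivFunOnFinite) ?_
    intro s
    have happ : ∀ i : Fin N,
        ((Multiset.toFinsupp.toEquiv.trans Finsupp.equivFunOnFinite) s) i = s.count i := by
      intro i
      simp [Finsupp.equivFunOnFinite, Multiset.toFinsupp_apply]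
    rw [show (∑ i : Fin N, ((Multiset.toFinsupp.toEquiv.trans Finsupp.equivFunOnFinite) s) i)
      = ∑ i : Fin N, s.count i from Finset.sum_congr rfl fun i _ => happ i, hcount s]
  rw [← Nat.card_congr e, Nat.card_eq_fintype_card, Sym.card_sym_eq_choose, Fintype.card_fin]

end EhrhartKn

open EhrhartKn in
/-- The number of lattice points in the `t`-th dilate of the Laplacian
simplex `T_{K_n}` of the complete graph equals `C(tn+n-1, n-1)`. Here
`T_{K_n}` is the convex hull of the rows `r_i` of `L_B = L(K_n)·A`, where
`r_i` has `j`-th coordinate `n-1-j` if `i ≤ j` and `-(j+1)` otherwise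
(0-based indexing). -/
theorem ehrhart_complete_graph {n : ℕ} (hn : 1 ≤ n) (t : ℕ)
    (T : Set (Fin (n - 1) → ℝ))
    (hT : T = convexHull ℝ (Set.range fun i : Fin n =>
      fun j : Fin (n - 1) =>
        (if (i : ℕ) ≤ (j : ℕ) then (n : ℝ) - 1 - (j : ℕ)
         else -((j : ℕ) + 1)))) :
    Nat.card {x : Fin (n - 1) → ℤ |
        (fun k => (x k : ℝ)) ∈ (t : ℝ) • T} =
      (t * n + n - 1).choose (n - 1) := by
  subst hT
  obtain ⟨m, rfl⟩ : ∃ m, n = m + 1 := ⟨n - 1, by omega⟩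
  show Nat.card {x : Fin m → ℤ |
      (fun k => (x k : ℝ)) ∈ (t : ℝ) • convexHull ℝ (Set.range (vtx m))} =
    (t * (m + 1) + (m + 1) - 1).choose m
  rcases Nat.eq_zero_or_pos t with ht | ht
  · subst ht
    have hne : (convexHull ℝ (Set.range (vtx m))).Nonempty :=
      convexHull_nonempty_iff.2 (Set.range_nonempty _)
    have h0 : ((0 : ℕ) : ℝ) • convexHull ℝ (Set.range (vtx m)) = 0 := by
      rw [Nat.cast_zero, Set.zero_smul_set hne]
    have hsetz : {x : Fin m → ℤ |
        (fun k => (x k : ℝ)) ∈ ((0 : ℕ) : ℝ) • convexHull ℝ (Set.range (vtx m))}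
        = {0} := by
      ext x
      simp only [Set.mem_setOf_eq, h0, Set.mem_singleton_iff]
      constructor
      · intro hmem
        have h1 : (fun k => ((x k : ℤ) : ℝ)) = 0 := by simpa using hmem
        funext k
        show x k = 0
        have h2 : ((x k : ℤ) : ℝ) = 0 := by
          have := congrFun h1 k
          simpa using this
        exact_mod_cast h2
      · rintro rfl
        show (fun k => (((0 : Fin m → ℤ) k : ℤ) : ℝ)) ∈ (0 : Set (Fin m → ℝ))
        have h3 : (fun k => (((0 : Fin m → ℤ) k : ℤ) : ℝ)) = (0 : Fin m → ℝ) := by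
          funext k; simp
        rw [h3]
        exact Set.zero_mem_zero

    rw [hsetz]
    have hrhs : (0 * (m + 1) + (m + 1) - 1).choose m = 1 := by
      rw [show 0 * (m + 1) + (m + 1) - 1 = m by omega, Nat.choose_self]
    rw [hrhs]
    exact Nat.card_unique
  · have hchar : {x : Fin m → ℤ |
        (fun k => (x k : ℝ)) ∈ (t : ℝ) • convexHull ℝ (Set.range (vtx m))}
        = {x : Fin m → ℤ | ∀ i : Fin (m + 1),
            0 ≤ zs m x ((i : ℕ) + 1) - zs m x (i : ℕ) + t} := by
      ext x
      simp only [Set.mem_setOf_eq]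
      constructor
      · intro h i
        have h2 := of_mem _ h i
        rw [xs_cast, xs_cast] at h2
        exact_mod_cast h2
      · intro h
        apply mem_of ht
        intro i
        rw [xs_cast, xs_cast]
        exact_mod_cast h i
    rw [hchar]
    calc Nat.card {x : Fin m → ℤ | ∀ i : Fin (m + 1),
            0 ≤ zs m x ((i : ℕ) + 1) - zs m x (i : ℕ) + t}
        = Nat.card {z : Fin (m + 1) → ℕ // ∑ i, z i = t * (m + 1)} :=
          Nat.card_congr (compEquiv m t)
      _ = ((m + 1) + t * (m + 1) - 1).choose (t * (m + 1)) := card_comp (m + 1) (t * (m + 1))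
      _ = (t * (m + 1) + (m + 1) - 1).choose m := by
          rw [show (m + 1) + t * (m + 1) - 1 = m + t * (m + 1) by omega,
            show t * (m + 1) + (m + 1) - 1 = m + t * (m + 1) by omega]
          have h3 := Nat.choose_symm (Nat.le_add_left (t * (m + 1)) m)
          rw [Nat.add_sub_cancel] at h3
          exact h3.symm
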